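/- Let (B, M) be a Noetherian local ring with M-adic completion T, and let S be a quasi-local subring of B with maximal ideal S ∩ M such that the map S → B/M² is surjective and IB ∩ S = I for every finitely generated ideal I of S. Then S is Noetherian and the completion of S at S ∩ M is isomorphic to T. -/

import Mathlib

set_option maxHeartbeats 1600000

theorem my_fg_span_sub {R M : Type*} [CommRing R] [AddCommGroup M] [Module R M]
    {s : Set M} (h : (Submodule.span R s).FG) :
    ∃ u : Set M, u ⊆ s ∧ u.Finite ∧ Submodule.span R u = Submodule.span R s := by
  obtain ⟨T, hT⟩ := h
  have key : ∀ t : M, ∃ u : Set M, u ⊆ s ∧ u.Finite ∧ (t ∈ T → t ∈ Submodule.span R u) := by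
    intro t
    by_cases ht : t ∈ T
    · have : (t : M) ∈ Submodule.span R s := hT ▸ Submodule.subset_span ht
      obtain ⟨u, hus, hu⟩ := Submodule.mem_span_finite_of_mem_span this
      exact ⟨u, hus, u.finite_toSet, fun _ => hu⟩
    · exact ⟨∅, Set.empty_subset _, Set.finite_empty, fun h => absurd h ht⟩
  choose u hus hufin humem using key
  refine ⟨⋃ t ∈ T, u t, ?_, ?_, ?_⟩
  · exact Set.iUnion₂_subset fun t _ => hus t
  · exact T.finite_toSet.biUnion fun t _ => hufin t
  · refine le_antisymm (Submodule.span_mono (Set.iUnion₂_subset fun t _ => hus t)) ?_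
    rw [← hT, Submodule.span_le]
    intro t ht
    exact Submodule.span_mono (Set.subset_iUnion₂ t ht) (humem t ht)


theorem my_adic_equiv {R B : Type*} [CommRing R] [CommRing B] (f : R →+* B)
    (I : Ideal R) (J : Ideal B)
    (hcom : ∀ n : ℕ, ((J ^ n • ⊤ : Ideal B)).comap f = (I ^ n • ⊤ : Ideal R))
    (hsur : ∀ (n : ℕ) (b : B), ∃ r : R, b - f r ∈ (J ^ n • ⊤ : Ideal B)) :
    ∃ φ : AdicCompletion I R ≃+* AdicCompletion J B,
      ∀ r : R, φ (algebraMap R (AdicCompletion I R) r) =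
        algebraMap B (AdicCompletion J B) (f r) := by
  let ψ : ∀ n : ℕ, (R ⧸ (I ^ n • ⊤ : Ideal R)) →+* (B ⧸ (J ^ n • ⊤ : Ideal B)) :=
    fun n => Ideal.quotientMap _ f (hcom n).ge
  have ψmk : ∀ (n : ℕ) (r : R),
      ψ n (Ideal.Quotient.mk _ r) = Ideal.Quotient.mk _ (f r) := fun n r =>
    Ideal.quotientMap_mk
  have ψinj : ∀ n, Function.Injective (ψ n) := fun n =>
    Ideal.quotientMap_injective' (hcom n).le
  have ψsurj : ∀ n, Function.Surjective (ψ n) := by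
    intro n y
    obtain ⟨b, rfl⟩ := Ideal.Quotient.mk_surjective y
    obtain ⟨r, hr⟩ := hsur n b
    refine ⟨Ideal.Quotient.mk _ r, ?_⟩
    rw [ψmk]
    refine Ideal.Quotient.eq.mpr ?_
    simpa using neg_mem hr
  have htrans : ∀ {m n : ℕ} (h : m ≤ n) (a : R ⧸ (I ^ n • ⊤ : Ideal R)),
      AdicCompletion.transitionMap J B h (ψ n a) =
        ψ m (AdicCompletion.transitionMap I R h a) := by
    intro m n h a
    obtain ⟨r, rfl⟩ := Ideal.Quotient.mk_surjective a
    rfl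
  let Φ : AdicCompletion I R →+* AdicCompletion J B :=
  { toFun := fun x => ⟨fun n => ψ n (x.val n), fun {m n} h => by
      rw [htrans, x.property h]⟩
    map_one' := Subtype.ext <| funext fun n => by
      show ψ n ((1 : AdicCompletion I R).val n) = (1 : AdicCompletion J B).val n
      rw [AdicCompletion.val_one, AdicCompletion.val_one, (ψ n).map_one]
    map_mul' := fun x y => Subtype.ext <| funext fun n => by
      show ψ n ((x * y).val n) = _
      rw [AdicCompletion.val_mul]
      show _ = ψ n (x.val n) * ψ n (y.val n)
      rw [(ψ n).map_mul]
    map_zero' := Subtype.ext <| funext fun n => by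
      show ψ n ((0 : AdicCompletion I R).val n) = (0 : AdicCompletion J B).val n
      rw [AdicCompletion.val_zero, AdicCompletion.val_zero]; exact (ψ n).map_zero
    map_add' := fun x y => Subtype.ext <| funext fun n => by
      show ψ n ((x + y).val n) = _
      rw [AdicCompletion.val_add]
      show _ = ψ n (x.val n) + ψ n (y.val n)
      exact (ψ n).map_add _ _ }
  have Φval : ∀ (x : AdicCompletion I R) (n : ℕ), (Φ x).val n = ψ n (x.val n) :=
    fun x n => rfl
  have Φinj : Function.Injective Φ := by
    intro x y hxy
    refine Subtype.ext <| funext fun n => ψinj n ?_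
    rw [← Φval, ← Φval, hxy]
  have Φsurj : Function.Surjective Φ := by
    intro y
    have : ∀ n, ∃ a, ψ n a = y.val n := fun n => ψsurj n (y.val n)
    choose a ha using this
    refine ⟨⟨a, ?_⟩, Subtype.ext <| funext fun n => by exact (Φval _ n).trans (ha n)⟩
    intro m n h
    refine ψinj m ?_
    rw [← htrans, ha, ha, y.property h]
  refine ⟨RingEquiv.ofBijective Φ ⟨Φinj, Φsurj⟩, fun r => ?_⟩
  refine Subtype.ext <| funext fun n => ?_
  exact ψmk n r

/-- If `S` is a quasi-local subring of a local ring `B` with surjective map to `B/M²` and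
good contraction of finitely generated ideals, then `S` is Noetherian and has the same
completion as `B`. -/
theorem stmt_5 (B : Type*) [CommRing B] [IsNoetherianRing B] [IsLocalRing B]
    (S : Subring B) [IsLocalRing ↥S]
    (hmax : IsLocalRing.maximalIdeal ↥S = (IsLocalRing.maximalIdeal B).comap S.subtype)
    (hsurj : Function.Surjective
      ((Ideal.Quotient.mk ((IsLocalRing.maximalIdeal B) ^ 2)).comp S.subtype))
    (hcontr : ∀ I : Ideal ↥S, I.FG → (I.map S.subtype).comap S.subtype = I) :
    IsNoetherianRing ↥S ∧
      ∃ φ : AdicCompletion (IsLocalRing.maximalIdeal ↥S) ↥S ≃+*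
              AdicCompletion (IsLocalRing.maximalIdeal B) B,
        ∀ s : ↥S,
          φ (algebraMap ↥S (AdicCompletion (IsLocalRing.maximalIdeal ↥S) ↥S) s) =
            algebraMap B (AdicCompletion (IsLocalRing.maximalIdeal B) B) (s : B) := by
  have hBfg : ∀ J : Ideal B, J.FG := fun J => (isNoetherianRing_iff_ideal_fg B).mp ‹_› J
  set mS := IsLocalRing.maximalIdeal ↥S with hmS
  set MB := IsLocalRing.maximalIdeal B with hMB
  -- Noetherianity of S
  have hNoeth : IsNoetherianRing ↥S := by
    rw [isNoetherianRing_iff_ideal_fg]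
    intro I
    have hfg : (Submodule.span B (⇑S.subtype '' (I : Set ↥S))).FG := hBfg (I.map S.subtype)
    obtain ⟨u, hus, hufin, huspan⟩ := my_fg_span_sub hfg
    set v : Set ↥S := S.subtype ⁻¹' u with hv
    have himg : ⇑S.subtype '' v = u :=
      Set.image_preimage_eq_of_subset
        (hus.trans (Set.image_subset_range _ _))
    have hvI : v ⊆ (I : Set ↥S) := by
      intro x hx
      obtain ⟨y, hy, hxy⟩ := hus hx
      rwa [← Subtype.coe_injective hxy]
    have hvfin : v.Finite := hufin.preimage (Set.injOn_of_injective Subtype.coe_injective)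
    set I₀ : Ideal ↥S := Ideal.span v with hI₀
    have hI₀fg : I₀.FG := Submodule.fg_span hvfin
    have hI₀le : I₀ ≤ I := Ideal.span_le.mpr hvI
    have hmapeq : I₀.map S.subtype = I.map S.subtype := by
      rw [hI₀, Ideal.map_span, himg]
      exact huspan
    have : I = I₀ := by
      refine le_antisymm ?_ hI₀le
      have h1 : I ≤ (I.map S.subtype).comap S.subtype := Ideal.le_comap_map
      rwa [← hmapeq, hcontr I₀ hI₀fg] at h1
    rw [this]; exact hI₀fg
  refine ⟨hNoeth, ?_⟩
  haveI := hNoeth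
  have hSfg : ∀ J : Ideal ↥S, J.FG := fun J => (isNoetherianRing_iff_ideal_fg ↥S).mp hNoeth J
  -- every b is congruent to an element of S mod MB
  have h2 : ∀ b : B, ∃ s : ↥S, b - ↑s ∈ MB ^ 2 := by
    intro b
    obtain ⟨s, hs⟩ := hsurj (Ideal.Quotient.mk (MB ^ 2) b)
    refine ⟨s, ?_⟩
    have h' : (↑s : B) - b ∈ MB ^ 2 := Ideal.Quotient.eq.mp hs
    simpa using neg_mem h'
  have h1 : ∀ b : B, ∃ s : ↥S, b - ↑s ∈ MB := by
    intro b
    obtain ⟨s, hs⟩ := h2 b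
    exact ⟨s, Ideal.pow_le_self two_ne_zero hs⟩
  -- MB is generated by mS
  have hM : MB = mS.map S.subtype := by
    refine le_antisymm ?_ ?_
    · refine Submodule.le_of_le_smul_of_le_jacobson_bot (I := MB) (hBfg MB) ?_ ?_
      · rw [IsLocalRing.jacobson_eq_maximalIdeal (⊥ : Ideal B) bot_ne_top]
      · intro m hm
        obtain ⟨s, hs2⟩ := h2 m
        have hs : m - ↑s ∈ MB := Ideal.pow_le_self two_ne_zero hs2
        have hsM : (↑s : B) ∈ MB := by
          have : (↑s : B) = m - (m - ↑s) := by ring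
          rw [this]; exact sub_mem hm hs
        have hs' : s ∈ mS := by rw [hmax]; exact hsM
        have hmem1 : (↑s : B) ∈ mS.map S.subtype ⊔ MB • MB :=
          Submodule.mem_sup_left (Ideal.mem_map_of_mem _ hs')
        have hmem2 : m - ↑s ∈ mS.map S.subtype ⊔ MB • MB := by
          refine Submodule.mem_sup_right ?_
          rw [Ideal.smul_eq_mul, ← pow_two]
          exact hs2
        have : m = ↑s + (m - ↑s) := by ring
        rw [this]; exact add_mem hmem1 hmem2
    · rw [Ideal.map_le_iff_le_comap, ← hmax]
  have hMn : ∀ n : ℕ, MB ^ n = (mS ^ n).map S.subtype := by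
    intro n
    rw [Ideal.map_pow, ← hM]
  have hcomap : ∀ n : ℕ, (MB ^ n).comap S.subtype = mS ^ n := by
    intro n
    rw [hMn n]
    exact hcontr (mS ^ n) (hSfg _)
  -- approximation step
  have hstep : ∀ (n : ℕ) (x : B), x ∈ MB ^ n →
      ∃ t : ↥S, (↑t : B) ∈ MB ^ n ∧ x - ↑t ∈ MB ^ (n + 1) := by
    intro n x hx
    have hx' : x ∈ Ideal.span (⇑S.subtype '' ((mS ^ n : Ideal ↥S) : Set ↥S)) := by
      rw [← Ideal.map_span, Ideal.span_eq, ← hMn n]; exact hx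
    refine Submodule.span_induction ?_ ?_ ?_ ?_ hx'
    · rintro x ⟨y, hy, rfl⟩
      refine ⟨y, ?_, by simpa using Ideal.zero_mem _⟩
      rw [hMn n]
      exact Ideal.mem_map_of_mem _ hy
    · exact ⟨0, by simpa using Ideal.zero_mem _, by simpa using Ideal.zero_mem _⟩
    · rintro x y _ _ ⟨t₁, ht₁, hx₁⟩ ⟨t₂, ht₂, hx₂⟩
      refine ⟨t₁ + t₂, by push_cast; exact add_mem ht₁ ht₂, ?_⟩
      have : x + y - ↑(t₁ + t₂) = (x - ↑t₁) + (y - ↑t₂) := by push_cast; ring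
      rw [this]; exact add_mem hx₁ hx₂
    · rintro a x _ ⟨t, ht, hxt⟩
      obtain ⟨s', hs'⟩ := h1 a
      refine ⟨s' * t, ?_, ?_⟩
      · push_cast
        exact Ideal.mul_mem_left _ _ ht
      · have heq : a • x - ↑(s' * t) = a * (x - ↑t) + (a - ↑s') * ↑t := by
          push_cast; rw [smul_eq_mul]; ring
        rw [heq]
        refine add_mem (Ideal.mul_mem_left _ _ hxt) ?_
        rw [pow_succ']
        exact Ideal.mul_mem_mul hs' ht
  have hsurjn : ∀ (n : ℕ) (b : B), ∃ s : ↥S, b - ↑s ∈ MB ^ n := by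
    intro n
    induction n with
    | zero => exact fun b => ⟨0, by simp⟩
    | succ n ih =>
      intro b
      obtain ⟨s, hs⟩ := ih b
      obtain ⟨t, _, ht⟩ := hstep n (b - ↑s) hs
      refine ⟨s + t, ?_⟩
      have : b - ↑(s + t) = (b - ↑s) - ↑t := by push_cast; ring
      rw [this]; exact ht
  have smul_topS : ∀ n : ℕ, (mS ^ n • ⊤ : Ideal ↥S) = mS ^ n := by
    intro n; rw [Ideal.smul_eq_mul, Ideal.mul_top]
  have smul_topB : ∀ n : ℕ, (MB ^ n • ⊤ : Ideal B) = MB ^ n := by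
    intro n; rw [Ideal.smul_eq_mul, Ideal.mul_top]
  have hcom' : ∀ n : ℕ, ((MB ^ n • ⊤ : Ideal B)).comap S.subtype = (mS ^ n • ⊤ : Ideal ↥S) := by
    intro n; rw [smul_topS, smul_topB, hcomap]
  have hsur' : ∀ (n : ℕ) (b : B), ∃ s : ↥S, b - S.subtype s ∈ (MB ^ n • ⊤ : Ideal B) := by
    intro n b
    obtain ⟨s, hs⟩ := hsurjn n b
    refine ⟨s, ?_⟩
    rw [smul_topB]
    exact hs
  obtain ⟨φ, hφ⟩ := my_adic_equiv S.subtype mS MB hcom' hsur'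
  exact ⟨φ, fun s => hφ s⟩
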